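/- Let k be a field of characteristic p ≥ 5 and A = k[x,y]/(x^p, y^p). Let D be the derivation of A given by D = ∂_x + x^{p-1} y ∂_y. Then the p-fold composition D^p (as a k-linear endomorphism of A) equals -y∂_y. In particular, D^p is again a derivation of A. -/

import Mathlib

set_option maxHeartbeats 1000000
set_option synthInstance.maxHeartbeats 200000


open MvPolynomial

/-- The ideal `(x^p, y^p)` of `k[x,y]`. -/
noncomputable abbrev TruncIdeal (k : Type*) [Field k] (p : ℕ) : Ideal (MvPolynomial (Fin 2) k) :=
  Ideal.span {X 0 ^ p, X 1 ^ p}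

/-- The truncated polynomial algebra `A = k[x,y]/(x^p, y^p)`. -/
noncomputable abbrev TruncA (k : Type*) [Field k] (p : ℕ) :=
  MvPolynomial (Fin 2) k ⧸ TruncIdeal k p

/-- The quotient map `k[x,y] → A`. -/
noncomputable abbrev tmk (k : Type*) [Field k] (p : ℕ) :
    MvPolynomial (Fin 2) k →+* TruncA k p := Ideal.Quotient.mk (TruncIdeal k p)

section Aux
variable {k : Type*} [Field k] {p : ℕ}

lemma tmk_C_mul (c : k) (g : MvPolynomial (Fin 2) k) :
    tmk k p (C c * g) = c • tmk k p g := by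
  rw [← smul_eq_C_mul]; rfl

lemma tmk_xp_zero : tmk k p (X 0 ^ p) = 0 := by
  rw [Ideal.Quotient.eq_zero_iff_mem]
  exact Ideal.subset_span (Set.mem_insert _ _)

lemma tmk_high (a b : ℕ) (ha : p ≤ a) : tmk k p (X 0 ^ a * X 1 ^ b) = 0 := by
  have h : (X 0 : MvPolynomial (Fin 2) k) ^ a = X 0 ^ p * X 0 ^ (a - p) := by
    rw [← pow_add]; congr 1; omega
  rw [h, mul_assoc, map_mul, tmk_xp_zero, zero_mul]

lemma tmk_nat_mul (n : ℕ) (g : MvPolynomial (Fin 2) k) :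
    tmk k p ((n : MvPolynomial (Fin 2) k) * g) = (n : k) • tmk k p g := by
  rw [← map_natCast (C : k →+* MvPolynomial (Fin 2) k), tmk_C_mul]

lemma tmk_add (f g : MvPolynomial (Fin 2) k) :
    tmk k p (f + g) = tmk k p f + tmk k p g := map_add _ _ _

lemma Dstep (D : Module.End k (TruncA k p))
    (hD : ∀ f, D (tmk k p f) = tmk k p (pderiv 0 f + X 0 ^ (p - 1) * X 1 * pderiv 1 f))
    (a b : ℕ) (ha : 1 ≤ a) :
    D (tmk k p (X 0 ^ a * X 1 ^ b)) = (a : k) • tmk k p (X 0 ^ (a - 1) * X 1 ^ b) := by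
  rw [hD, tmk_add]
  have h1 : (pderiv (R := k) 0) ((X 0 : MvPolynomial (Fin 2) k) ^ a * X 1 ^ b)
      = (a : MvPolynomial (Fin 2) k) * (X 0 ^ (a - 1) * X 1 ^ b) := by
    rw [pderiv_mul, pderiv_pow, pderiv_pow]
    simp [pderiv_X]
    ring
  have h2 : tmk k p (X 0 ^ (p - 1) * X 1 * (pderiv (R := k) 1) ((X 0 : MvPolynomial (Fin 2) k) ^ a * X 1 ^ b)) = 0 := by
    rcases Nat.eq_zero_or_pos b with hb | hb
    · subst hb; simp
    · have h3 : (X 0 : MvPolynomial (Fin 2) k) ^ (p - 1) * X 1 * (pderiv (R := k) 1) ((X 0 : MvPolynomial (Fin 2) k) ^ a * X 1 ^ b)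
          = (b : MvPolynomial (Fin 2) k) * (X 0 ^ (p - 1 + a) * X 1 ^ b) := by
        rw [pderiv_mul, pderiv_pow, pderiv_pow]
        simp [pderiv_X]
        rw [pow_add]
        have : (X 1 : MvPolynomial (Fin 2) k) ^ b = X 1 ^ (b - 1) * X 1 := by
          rw [← pow_succ]; congr 1; omega
        rw [this]; ring
      rw [h3, tmk_nat_mul, tmk_high _ _ (by omega), smul_zero]
  rw [h2, add_zero, h1, tmk_nat_mul]

lemma Dzero (D : Module.End k (TruncA k p))
    (hD : ∀ f, D (tmk k p f) = tmk k p (pderiv 0 f + X 0 ^ (p - 1) * X 1 * pderiv 1 f))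
    (b : ℕ) :
    D (tmk k p (X 0 ^ 0 * X 1 ^ b)) = (b : k) • tmk k p (X 0 ^ (p - 1) * X 1 ^ b) := by
  rw [hD]
  rcases Nat.eq_zero_or_pos b with hb | hb
  · subst hb; simp
  · have h1 : (pderiv (R := k) 0) ((X 0 : MvPolynomial (Fin 2) k) ^ 0 * X 1 ^ b) = 0 := by
      simp [pderiv_pow, pderiv_X]
    have h2 : (X 0 : MvPolynomial (Fin 2) k) ^ (p - 1) * X 1 * (pderiv (R := k) 1) ((X 0 : MvPolynomial (Fin 2) k) ^ 0 * X 1 ^ b)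
        = (b : MvPolynomial (Fin 2) k) * (X 0 ^ (p - 1) * X 1 ^ b) := by
      rw [pderiv_mul, pderiv_pow, pderiv_pow]
      simp [pderiv_X]
      have : (X 1 : MvPolynomial (Fin 2) k) ^ b = X 1 ^ (b - 1) * X 1 := by
        rw [← pow_succ]; congr 1; omega
      rw [this]; ring
    rw [h1, tmk_add, map_zero, zero_add, h2, tmk_nat_mul]

lemma Diter (D : Module.End k (TruncA k p))
    (hD : ∀ f, D (tmk k p f) = tmk k p (pderiv 0 f + X 0 ^ (p - 1) * X 1 * pderiv 1 f))
    (n : ℕ) : ∀ a b : ℕ, n ≤ a →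
    (D ^ n) (tmk k p (X 0 ^ a * X 1 ^ b))
      = (a.descFactorial n : k) • tmk k p (X 0 ^ (a - n) * X 1 ^ b) := by
  induction n with
  | zero => intro a b _; simp
  | succ n ih =>
    intro a b h
    rw [pow_succ, Module.End.mul_apply, Dstep D hD a b (by omega), map_smul,
      ih (a - 1) b (by omega), smul_smul]
    have key : a.descFactorial (n + 1) = a * (a - 1).descFactorial n := by
      conv_lhs => rw [show a = (a - 1) + 1 by omega]
      rw [Nat.succ_descFactorial_succ, show a - 1 + 1 = a by omega]
    rw [show a - 1 - n = a - (n + 1) by omega, key, Nat.cast_mul]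

end Aux

/-- For `D = ∂_x + x^{p-1} y ∂_y` on `A = k[x,y]/(x^p,y^p)` in characteristic `p ≥ 5`,
the `p`-fold composition `D^p` equals `-y∂_y`. -/


theorem stmt6 {k : Type*} [Field k] (p : ℕ) [Fact p.Prime] (hp : 5 ≤ p) [CharP k p]
    (D E : Module.End k (TruncA k p))
    (hD : ∀ f, D (tmk k p f) = tmk k p (pderiv 0 f + X 0 ^ (p - 1) * X 1 * pderiv 1 f))
    (hE : ∀ f, E (tmk k p f) = tmk k p (X 1 * pderiv 1 f)) :
    D ^ p = -E := by
  have hwilson : (((p - 1).factorial : k)) = -1 := by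
    have h1 : ((ZMod.castHom (dvd_refl p) k) (((p - 1).factorial : ZMod p))) = ((p - 1).factorial : k) := by
      rw [map_natCast]
    rw [← h1, ZMod.wilsons_lemma, map_neg, map_one]
  have hEmono : ∀ a b : ℕ, E (tmk k p (X 0 ^ a * X 1 ^ b))
      = (b : k) • tmk k p (X 0 ^ a * X 1 ^ b) := by
    intro a b
    rw [hE]
    rcases Nat.eq_zero_or_pos b with hb | hb
    · subst hb; simp [pderiv_pow, pderiv_X]
    · have h : (X 1 : MvPolynomial (Fin 2) k) * (pderiv (R := k) 1) ((X 0 : MvPolynomial (Fin 2) k) ^ a * X 1 ^ b)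
          = (b : MvPolynomial (Fin 2) k) * (X 0 ^ a * X 1 ^ b) := by
        rw [pderiv_mul, pderiv_pow, pderiv_pow]
        simp [pderiv_X]
        have h' : (X 1 : MvPolynomial (Fin 2) k) ^ b = X 1 ^ (b - 1) * X 1 := by
          rw [← pow_succ]; congr 1; omega
        rw [h']; ring
      rw [h, tmk_nat_mul]
  have hmono : ∀ a b : ℕ, (D ^ p) (tmk k p (X 0 ^ a * X 1 ^ b))
      = -((b : k) • tmk k p (X 0 ^ a * X 1 ^ b)) := by
    intro a b
    rcases le_or_gt p a with ha | ha
    · rw [tmk_high a b ha]; simp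
    · have hsplit : D ^ p = D ^ (p - 1 - a) * D * D ^ a := by
        rw [mul_assoc, ← pow_succ', ← pow_add]
        congr 1
        omega
      rw [hsplit, Module.End.mul_apply, Module.End.mul_apply,
        Diter D hD a a b le_rfl, Nat.sub_self, map_smul, Dzero D hD b,
        map_smul, map_smul, Diter D hD (p - 1 - a) (p - 1) b (by omega),
        show p - 1 - (p - 1 - a) = a by omega,
        smul_smul, smul_smul, Nat.descFactorial_self]
      have hfact : a.factorial * (b * (p - 1).descFactorial (p - 1 - a)) = b * (p - 1).factorial := by
        rw [← Nat.factorial_mul_descFactorial (show p - 1 - a ≤ p - 1 by omega),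
          show p - 1 - (p - 1 - a) = a by omega]
        ring
      have hc : ((a.factorial : k)) * (b : k) * (((p - 1).descFactorial (p - 1 - a) : ℕ) : k)
          = -(b : k) := by
        have h2 : ((a.factorial * (b * (p - 1).descFactorial (p - 1 - a)) : ℕ) : k)
            = ((b * (p - 1).factorial : ℕ) : k) := by rw [hfact]
        push_cast at h2
        rw [mul_assoc, h2, hwilson]; ring
      rw [hc, neg_smul]
  refine LinearMap.ext fun v => ?_
  obtain ⟨g, rfl⟩ := Ideal.Quotient.mk_surjective v
  show (D ^ p) (tmk k p g) = (-E) (tmk k p g)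
  induction g using MvPolynomial.induction_on' with
  | add f g hf hg => rw [tmk_add, map_add, map_add, hf, hg]
  | monomial d c =>
    have hm : (monomial d) c = C c * ((X 0 : MvPolynomial (Fin 2) k) ^ d 0 * X 1 ^ d 1) := by
      rw [monomial_eq]
      congr 1
      rw [Finsupp.prod_fintype _ _ (fun i => pow_zero _), Fin.prod_univ_two]
    rw [hm, tmk_C_mul, map_smul, map_smul, hmono, LinearMap.neg_apply, hEmono, smul_neg]
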